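/- Let f : J → (0,∞) be a differentiable geometrically convex function on an interval J ⊂ (0,∞), a₁,...,aₙ ∈ J, t₁,...,tₙ ≥ 0 with Σtᵢ = 1, and A := Σᵢ tᵢaᵢ ∈ J. Then L̂·f(A) ≤ Σᵢ tᵢ f(aᵢ) ≤ R̂·f(A), where L̂ := Σᵢ tᵢ (aᵢ/A)^(A f'(A)/f(A)) and R̂ := Σᵢ tᵢ (aᵢ/A)^(aᵢ f'(aᵢ)/f(aᵢ)). -/

import Mathlib

open Real Finset

lemma key_tangent (J : Set ℝ) (hJ : J ⊆ Set.Ioi (0 : ℝ)) (f f' : ℝ → ℝ)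
    (hpos : ∀ x ∈ J, 0 < f x)
    (hderiv : ∀ x ∈ J, HasDerivAt f (f' x) x)
    (hgc : ∀ x ∈ J, ∀ y ∈ J, ∀ l : ℝ, 0 ≤ l → l ≤ 1 →
      f (x ^ (1 - l) * y ^ l) ≤ f x ^ (1 - l) * f y ^ l)
    (x y : ℝ) (hx : x ∈ J) (hy : y ∈ J) :
    f x * (y / x) ^ (x * f' x / f x) ≤ f y := by
  have hx0 : 0 < x := hJ hx
  have hy0 : 0 < y := hJ hy
  have hfx : 0 < f x := hpos x hx
  have hfy : 0 < f y := hpos y hy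
  set D : ℝ := Real.log (f y) - Real.log (f x) with hD
  set E : ℝ := Real.log y - Real.log x with hE
  set ψ : ℝ → ℝ := fun l => Real.exp (Real.log (f x) + l * D)
      - f (Real.exp (Real.log x + l * E)) with hψ
  have hψ0 : ψ 0 = 0 := by simp [hψ, Real.exp_log hfx, Real.exp_log hx0]
  -- derivative of ψ at 0
  have h1 : HasDerivAt (fun l : ℝ => Real.exp (Real.log (f x) + l * D)) (f x * D) 0 := by
    have : HasDerivAt (fun l : ℝ => Real.log (f x) + l * D) D 0 := by
      simpa using ((hasDerivAt_id (0:ℝ)).mul_const D).const_add (Real.log (f x))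
    have := this.exp
    simpa [Real.exp_log hfx] using this
  have h2 : HasDerivAt (fun l : ℝ => f (Real.exp (Real.log x + l * E))) (f' x * (x * E)) 0 := by
    have hin : HasDerivAt (fun l : ℝ => Real.exp (Real.log x + l * E)) (x * E) 0 := by
      have : HasDerivAt (fun l : ℝ => Real.log x + l * E) E 0 := by
        simpa using ((hasDerivAt_id (0:ℝ)).mul_const E).const_add (Real.log x)
      have := this.exp
      simpa [Real.exp_log hx0] using this
    have hfd : HasDerivAt f (f' x) (Real.exp (Real.log x + 0 * E)) := by
      simpa [Real.exp_log hx0] using hderiv x hx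
    exact hfd.comp 0 hin
  have hψd : HasDerivAt ψ (f x * D - f' x * (x * E)) 0 := h1.sub h2
  -- ψ nonneg on (0,1]
  have hψnn : ∀ l ∈ Set.Ioc (0:ℝ) 1, 0 ≤ ψ l := by
    intro l hl
    have h1' : Real.exp (Real.log (f x) + l * D) = f x ^ (1 - l) * f y ^ l := by
      rw [Real.rpow_def_of_pos hfx, Real.rpow_def_of_pos hfy, ← Real.exp_add]
      rw [hD]
      ring_nf
    have h2' : Real.exp (Real.log x + l * E) = x ^ (1 - l) * y ^ l := by
      rw [Real.rpow_def_of_pos hx0, Real.rpow_def_of_pos hy0, ← Real.exp_add]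
      rw [hE]
      ring_nf
    have := hgc x hx y hy l hl.1.le hl.2
    simp only [hψ, h1', h2']
    linarith
  -- derivative nonneg
  have hslope : Filter.Tendsto (slope ψ 0) (nhdsWithin 0 (Set.Ioi 0))
      (nhds (f x * D - f' x * (x * E))) := by
    have := hasDerivAt_iff_tendsto_slope.1 hψd
    exact this.mono_left (nhdsWithin_mono 0 (fun z hz => Set.mem_compl_singleton_iff.2
      (ne_of_gt hz)))
  have hder_nn : 0 ≤ f x * D - f' x * (x * E) := by
    refine ge_of_tendsto hslope ?_
    filter_upwards [self_mem_nhdsWithin, Ioc_mem_nhdsGT_of_mem (by norm_num :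
        (0:ℝ) ∈ Set.Ico (0:ℝ) 1)] with l hl hl1
    have : 0 ≤ ψ l := hψnn l hl1
    have : 0 ≤ ψ l / l := div_nonneg this (le_of_lt hl)
    simpa [slope_def_field, hψ0] using this
  -- conclude
  have hkey : x * f' x / f x * E ≤ D := by
    rw [div_mul_eq_mul_div, div_le_iff₀ hfx]
    nlinarith
  have hrw : f x * (y / x) ^ (x * f' x / f x)
      = Real.exp (Real.log (f x) + x * f' x / f x * E) := by
    rw [Real.rpow_def_of_pos (div_pos hy0 hx0), Real.exp_add, Real.exp_log hfx,
      Real.log_div (ne_of_gt hy0) (ne_of_gt hx0)]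
    rw [hE]
    ring_nf
  rw [hrw]
  calc Real.exp (Real.log (f x) + x * f' x / f x * E)
      ≤ Real.exp (Real.log (f x) + D) := by
        apply Real.exp_le_exp.2; linarith
    _ = f y := by rw [hD]; rw [show Real.log (f x) + (Real.log (f y) - Real.log (f x))
          = Real.log (f y) by ring, Real.exp_log hfy]

theorem stmt_12 (J : Set ℝ) (hJ : J ⊆ Set.Ioi (0 : ℝ)) (f f' : ℝ → ℝ)
    (hpos : ∀ x ∈ J, 0 < f x)
    (hderiv : ∀ x ∈ J, HasDerivAt f (f' x) x)
    (hgc : ∀ x ∈ J, ∀ y ∈ J, ∀ l : ℝ, 0 ≤ l → l ≤ 1 →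
      f (x ^ (1 - l) * y ^ l) ≤ f x ^ (1 - l) * f y ^ l)
    (n : ℕ) (a : Fin n → ℝ) (t : Fin n → ℝ)
    (ha : ∀ i, a i ∈ J) (ht : ∀ i, 0 ≤ t i) (ht1 : ∑ i, t i = 1)
    (hA : (∑ i, t i * a i) ∈ J) :
    (∑ i, t i * (a i / ∑ j, t j * a j) ^
          ((∑ j, t j * a j) * f' (∑ j, t j * a j) / f (∑ j, t j * a j))) *
        f (∑ j, t j * a j) ≤ ∑ i, t i * f (a i) ∧
      ∑ i, t i * f (a i) ≤
        (∑ i, t i * (a i / ∑ j, t j * a j) ^ (a i * f' (a i) / f (a i))) *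
          f (∑ j, t j * a j) := by
  set A : ℝ := ∑ j, t j * a j with hAdef
  have hA0 : 0 < A := hJ hA
  have hfA : 0 < f A := hpos A hA
  constructor
  · rw [Finset.sum_mul]
    apply Finset.sum_le_sum
    intro i _
    rw [mul_assoc]
    apply mul_le_mul_of_nonneg_left _ (ht i)
    have := key_tangent J hJ f f' hpos hderiv hgc A (a i) hA (ha i)
    linarith [this]
  · rw [Finset.sum_mul]
    apply Finset.sum_le_sum
    intro i _
    rw [mul_assoc]
    apply mul_le_mul_of_nonneg_left _ (ht i)
    have hai0 : 0 < a i := hJ (ha i)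
    have hfai : 0 < f (a i) := hpos (a i) (ha i)
    have hk := key_tangent J hJ f f' hpos hderiv hgc (a i) A (ha i) hA
    set c : ℝ := a i * f' (a i) / f (a i) with hc
    have hprod : (A / a i) ^ c * (a i / A) ^ c = 1 := by
      rw [← Real.mul_rpow (by positivity) (by positivity)]
      rw [div_mul_div_comm, mul_comm A (a i), div_self (by positivity)]
      simp
    have hp1 : 0 < (A / a i) ^ c := Real.rpow_pos_of_pos (by positivity) c
    have hp2 : 0 < (a i / A) ^ c := Real.rpow_pos_of_pos (by positivity) c
    calc f (a i) = f (a i) * ((A / a i) ^ c * (a i / A) ^ c) := by rw [hprod, mul_one]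
      _ = (f (a i) * (A / a i) ^ c) * (a i / A) ^ c := by ring
      _ ≤ f A * (a i / A) ^ c := by
          apply mul_le_mul_of_nonneg_right hk hp2.le
      _ = (a i / A) ^ c * f A := mul_comm _ _
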